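/- Let β ∈ (0,1) be fixed and for each positive rational q let Â₁(β,q) denote the unique A₁ ∈ (0, 1/(1+β)) with q·T₁(β,A₁) = T₂(β,A₁). Then Â₁(β,q) tends to 1/(1+β) as q tends to 0 from the right (along positive rationals), and Â₁(β,q) tends to 0 as q tends to +∞ (along positive rationals). -/

import Mathlib

open Real Filter Topology

/-- The complete elliptic integral of the first kind,
`K(κ) = ∫₀¹ dv / √((1 - v²)(1 - κ² v²))`. -/
noncomputable def K (κ : ℝ) : ℝ :=
  ∫ v in (0:ℝ)..1, 1 / Real.sqrt ((1 - v ^ 2) * (1 - κ ^ 2 * v ^ 2))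

/-- The modulus `κ₁(β, A₁)`, defined by
`κ₁² = (A₁(1-β) + √(1-4βA₁²)) / (2√(1-4βA₁²))`. -/
noncomputable def κ₁ (β A₁ : ℝ) : ℝ :=
  Real.sqrt ((A₁ * (1 - β) + Real.sqrt (1 - 4 * β * A₁ ^ 2)) /
    (2 * Real.sqrt (1 - 4 * β * A₁ ^ 2)))

/-- The modulus `κ₂(β)`, defined by `κ₂² = β/(1+β)`. -/
noncomputable def κ₂ (β : ℝ) : ℝ := Real.sqrt (β / (1 + β))

/-- The period `T₁(β,A₁) = 2√(2/a) (1-4βA₁²)^{-1/4} K(κ₁(β,A₁))` of the ξ-motion. -/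
noncomputable def T₁ (a β A₁ : ℝ) : ℝ :=
  2 * Real.sqrt (2 / a) / (1 - 4 * β * A₁ ^ 2) ^ ((1:ℝ)/4) * K (κ₁ β A₁)

/-- The period `T₂(β,A₁) = 2/√(a A₁ (1+β)) · K(κ₂(β))` of the φ-motion. -/
noncomputable def T₂ (a β A₁ : ℝ) : ℝ :=
  2 / Real.sqrt (a * A₁ * (1 + β)) * K (κ₂ β)


section Aux
open intervalIntegral

lemma pointwise_bound {κ : ℝ} (hκ : κ^2 < 1) {v : ℝ} (hv0 : 0 ≤ v) (hv1 : v ≤ 1) :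
    1 / Real.sqrt ((1 - v ^ 2) * (1 - κ ^ 2 * v ^ 2)) ≤
      1 / Real.sqrt (1 - κ^2) * (1 - v) ^ (-(1:ℝ)/2) := by
  have hk2 : 0 ≤ κ^2 := sq_nonneg κ
  have h1 : (1 - v) ≤ 1 - v^2 := by nlinarith
  have h2 : 1 - κ^2 ≤ 1 - κ^2 * v^2 := by nlinarith
  have h1' : (0:ℝ) ≤ 1 - v := by linarith
  have h2' : (0:ℝ) < 1 - κ^2 := by linarith
  have hprod : (1 - v) * (1 - κ^2) ≤ (1 - v^2) * (1 - κ^2*v^2) := by nlinarith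
  have hrw : (1 - v) ^ (-(1:ℝ)/2) = 1 / Real.sqrt (1 - v) := by
    rw [show (-(1:ℝ)/2) = -(1/2) by norm_num, Real.rpow_neg h1', Real.sqrt_eq_rpow, one_div]
    norm_num
  rw [hrw]
  have hmul : 1 / Real.sqrt (1 - κ^2) * (1 / Real.sqrt (1 - v))
      = 1 / Real.sqrt ((1 - v) * (1 - κ^2)) := by
    rw [Real.sqrt_mul h1', one_div, one_div, one_div, mul_inv]
    ring
  rw [hmul]
  rcases eq_or_lt_of_le h1' with h | h
  · have hv : v = 1 := by linarith
    subst hv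
    norm_num
  · apply one_div_le_one_div_of_le
    · apply Real.sqrt_pos.2; positivity
    · exact Real.sqrt_le_sqrt hprod

lemma K_integrand_integrable {κ : ℝ} (hκ : κ^2 < 1) :
    IntervalIntegrable (fun v => 1 / Real.sqrt ((1 - v ^ 2) * (1 - κ ^ 2 * v ^ 2)))
      MeasureTheory.volume 0 1 := by
  have h1 : IntervalIntegrable (fun u : ℝ => u ^ (-(1:ℝ)/2)) MeasureTheory.volume 0 1 :=
    intervalIntegrable_rpow' (by norm_num)
  have h2 : IntervalIntegrable (fun v : ℝ => (1 - v) ^ (-(1:ℝ)/2)) MeasureTheory.volume 0 1 := by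
    simpa using (h1.comp_sub_left 1).symm
  have h3 := h2.const_mul (1 / Real.sqrt (1 - κ^2))
  apply h3.mono_fun
  · apply Measurable.aestronglyMeasurable
    fun_prop
  · rw [Set.uIoc_of_le (by norm_num : (0:ℝ) ≤ 1)]
    refine (MeasureTheory.ae_restrict_iff' measurableSet_Ioc).mpr (MeasureTheory.ae_of_all _ ?_)
    intro v hv
    obtain ⟨hv0, hv1⟩ := hv
    dsimp only
    rw [Real.norm_eq_abs, Real.norm_eq_abs]
    have hb := pointwise_bound hκ hv0.le hv1
    have hn1 : (0:ℝ) ≤ 1 / Real.sqrt ((1 - v ^ 2) * (1 - κ ^ 2 * v ^ 2)) := by positivity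
    have h1v : (0:ℝ) ≤ 1 - v := by linarith
    have hn2 : (0:ℝ) ≤ 1 / Real.sqrt (1 - κ^2) * (1 - v) ^ (-(1:ℝ)/2) := by
      have := Real.rpow_nonneg h1v (-(1:ℝ)/2)
      positivity
    rw [abs_of_nonneg hn1, abs_of_nonneg hn2]
    exact hb

lemma half_le_K {κ : ℝ} (hκ : κ^2 < 1) : 1/2 ≤ K κ := by
  have hint := K_integrand_integrable hκ
  have hsub1 : Set.uIcc (0:ℝ) (1/2) ⊆ Set.uIcc (0:ℝ) 1 := by
    rw [Set.uIcc_of_le (by norm_num : (0:ℝ) ≤ 1/2), Set.uIcc_of_le (by norm_num : (0:ℝ) ≤ 1)]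
    exact Set.Icc_subset_Icc (le_refl _) (by norm_num)
  have hsub2 : Set.uIcc (1/2:ℝ) 1 ⊆ Set.uIcc (0:ℝ) 1 := by
    rw [Set.uIcc_of_le (by norm_num : (1/2:ℝ) ≤ 1), Set.uIcc_of_le (by norm_num : (0:ℝ) ≤ 1)]
    exact Set.Icc_subset_Icc (by norm_num) (le_refl _)
  have hi1 := hint.mono_set hsub1
  have hi2 := hint.mono_set hsub2
  have hsplit := integral_add_adjacent_intervals hi1 hi2
  have hlow : (1/2:ℝ) ≤ ∫ v in (0:ℝ)..(1/2), 1 / Real.sqrt ((1 - v ^ 2) * (1 - κ ^ 2 * v ^ 2)) := by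
    have hmono := integral_mono_on (by norm_num : (0:ℝ) ≤ 1/2)
      (_root_.intervalIntegrable_const (c := (1:ℝ))) hi1 ?_
    · calc (1/2:ℝ) = ∫ _ in (0:ℝ)..(1/2), (1:ℝ) := by simp
        _ ≤ _ := hmono
    · intro v hv
      obtain ⟨hv0, hv1⟩ := hv
      have hv2 : v^2 ≤ 1/4 := by nlinarith
      have hd1 : 0 < 1 - v^2 := by nlinarith
      have hd2 : 0 < 1 - κ^2*v^2 := by nlinarith [sq_nonneg κ, sq_nonneg (κ*v)]
      have hd : 0 < (1 - v^2) * (1 - κ^2*v^2) := mul_pos hd1 hd2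
      have hle1 : (1 - v^2) * (1 - κ^2*v^2) ≤ 1 := by nlinarith [sq_nonneg κ, sq_nonneg (κ*v), sq_nonneg v]
      have hs1 : Real.sqrt ((1 - v^2) * (1 - κ^2*v^2)) ≤ 1 := Real.sqrt_le_one.mpr hle1
      exact one_le_one_div (Real.sqrt_pos.2 hd) hs1
  have hhigh : (0:ℝ) ≤ ∫ v in (1/2:ℝ)..1, 1 / Real.sqrt ((1 - v ^ 2) * (1 - κ ^ 2 * v ^ 2)) :=
    integral_nonneg (by norm_num) (fun v _ => by positivity)
  unfold K
  linarith [hsplit]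

lemma K_le {κ : ℝ} (hκ : κ^2 < 1) : K κ ≤ 2 / Real.sqrt (1 - κ^2) := by
  have h2' : (0:ℝ) < 1 - κ^2 := by nlinarith
  have h1 : IntervalIntegrable (fun u : ℝ => u ^ (-(1:ℝ)/2)) MeasureTheory.volume 0 1 :=
    intervalIntegrable_rpow' (by norm_num)
  have h2 : IntervalIntegrable (fun v : ℝ => (1 - v) ^ (-(1:ℝ)/2)) MeasureTheory.volume 0 1 := by
    simpa using (h1.comp_sub_left 1).symm
  have h3 := h2.const_mul (1 / Real.sqrt (1 - κ^2))
  have hmono := integral_mono_on (by norm_num : (0:ℝ) ≤ 1)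
    (K_integrand_integrable hκ) h3 (fun v hv => pointwise_bound hκ hv.1 hv.2)
  have hval : ∫ v in (0:ℝ)..1, 1 / Real.sqrt (1 - κ^2) * (1 - v) ^ (-(1:ℝ)/2)
      = 1 / Real.sqrt (1 - κ^2) * 2 := by
    rw [integral_const_mul]
    congr 1
    have hc : (∫ v in (0:ℝ)..1, (1 - v) ^ (-(1:ℝ)/2))
        = ∫ u in (0:ℝ)..1, u ^ (-(1:ℝ)/2) := by
      simpa using integral_comp_sub_left (a := (0:ℝ)) (b := (1:ℝ)) (fun u : ℝ => u ^ (-(1:ℝ)/2)) 1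
    rw [hc, integral_rpow (Or.inl (by norm_num))]
    norm_num
  calc K κ ≤ _ := hmono
    _ = 1 / Real.sqrt (1 - κ^2) * 2 := hval
    _ = 2 / Real.sqrt (1 - κ^2) := by ring

lemma kappa1_facts {β A : ℝ} (hβ0 : 0 < β) (hβ1 : β < 1) (hA : 0 < A) (hA2 : A < 1/(1+β)) :
    0 < 1 - 4*β*A^2 ∧ (κ₁ β A)^2 < 1 ∧ (1 - A*(1+β))/4 ≤ 1 - (κ₁ β A)^2 ∧
      1 - A*(1+β) ≤ 1 - 4*β*A^2 := by
  have hb : (0:ℝ) < 1 + β := by linarith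
  have hu1 : A * (1+β) < 1 := by
    rw [lt_div_iff₀ hb] at hA2
    linarith [hA2]
  have hu0 : 0 < A * (1+β) := by positivity
  have h4β : 4*β*A^2 ≤ (A*(1+β))^2 := by nlinarith [sq_nonneg (1-β), sq_nonneg A]
  have hpos : 0 < 1 - 4*β*A^2 := by nlinarith
  set s := Real.sqrt (1 - 4*β*A^2) with hs
  have hs0 : 0 < s := Real.sqrt_pos.2 hpos
  have hs1 : s ≤ 1 := Real.sqrt_le_one.mpr (by nlinarith)
  have hssq : s^2 = 1 - 4*β*A^2 := Real.sq_sqrt hpos.le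
  have hA1β : 0 ≤ A * (1-β) := by nlinarith
  have hAlt : A * (1-β) < 1 := by nlinarith
  have hdiff : (s - A*(1-β)) * (s + A*(1-β)) = (1 - A*(1+β)) * (1 + A*(1+β)) := by
    nlinarith [hssq]
  have hsum : s + A*(1-β) < 2 := by nlinarith
  have hkey : (1 - A*(1+β))/2 ≤ s - A*(1-β) := by nlinarith
  have hκsq : (κ₁ β A)^2 = (A*(1-β) + s)/(2*s) := by
    rw [κ₁]
    rw [Real.sq_sqrt (by positivity)]
  have hone : 1 - (κ₁ β A)^2 = (s - A*(1-β))/(2*s) := by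
    rw [hκsq]; field_simp; ring
  have hone' : (1 - A*(1+β))/4 ≤ 1 - (κ₁ β A)^2 := by
    rw [hone, le_div_iff₀ (by positivity)]
    nlinarith
  refine ⟨hpos, ?_, hone', by nlinarith⟩
  · nlinarith [hone', hu1]

lemma kappa2_facts {β : ℝ} (hβ0 : 0 < β) (hβ1 : β < 1) :
    (κ₂ β)^2 < 1 ∧ 1 - (κ₂ β)^2 = 1/(1+β) := by
  have hb : (0:ℝ) < 1 + β := by linarith
  have h : (κ₂ β)^2 = β/(1+β) := Real.sq_sqrt (by positivity)
  constructor
  · rw [h, div_lt_one hb]; linarith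
  · rw [h]; field_simp; ring

lemma T₁_lower {a β A : ℝ} (ha : 0 < a) (hβ0 : 0 < β) (hβ1 : β < 1)
    (hA : 0 < A) (hA2 : A < 1/(1+β)) : Real.sqrt (2/a) ≤ T₁ a β A := by
  obtain ⟨hpos, hκlt, _, _⟩ := kappa1_facts hβ0 hβ1 hA hA2
  have hx0 : 0 < (1 - 4*β*A^2) ^ ((1:ℝ)/4) := Real.rpow_pos_of_pos hpos _
  have hx1 : (1 - 4*β*A^2) ^ ((1:ℝ)/4) ≤ 1 :=
    Real.rpow_le_one hpos.le (by nlinarith) (by norm_num)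
  have hc : 0 < Real.sqrt (2/a) := Real.sqrt_pos.2 (by positivity)
  have h1 : 2 * Real.sqrt (2/a) ≤ 2 * Real.sqrt (2/a) / (1 - 4*β*A^2) ^ ((1:ℝ)/4) := by
    rw [le_div_iff₀ hx0]
    nlinarith
  have h2 := half_le_K hκlt
  rw [T₁]
  calc Real.sqrt (2/a) = 2 * Real.sqrt (2/a) * (1/2) := by ring
    _ ≤ (2 * Real.sqrt (2/a) / (1 - 4*β*A^2) ^ ((1:ℝ)/4)) * K (κ₁ β A) := by
        apply mul_le_mul h1 h2 (by norm_num) (by positivity)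

lemma T₁_upper {a β A δ : ℝ} (ha : 0 < a) (hβ0 : 0 < β) (hβ1 : β < 1)
    (hA : 0 < A) (hA2 : A < 1/(1+β)) (hδ : 0 < δ) (hδA : δ ≤ 1 - A*(1+β)) :
    T₁ a β A ≤ 2 * Real.sqrt (2/a) / δ ^ ((1:ℝ)/4) * (2 / Real.sqrt (δ/4)) := by
  obtain ⟨hpos, hκlt, hκge, hge⟩ := kappa1_facts hβ0 hβ1 hA hA2
  have hδ4 : (0:ℝ) < δ/4 := by linarith
  have hx0 : 0 < (1 - 4*β*A^2) ^ ((1:ℝ)/4) := Real.rpow_pos_of_pos hpos _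
  have hδx : δ ^ ((1:ℝ)/4) ≤ (1 - 4*β*A^2) ^ ((1:ℝ)/4) :=
    Real.rpow_le_rpow hδ.le (by linarith) (by norm_num)
  have hδx0 : 0 < δ ^ ((1:ℝ)/4) := Real.rpow_pos_of_pos hδ _
  have h1 : 2 * Real.sqrt (2/a) / (1 - 4*β*A^2) ^ ((1:ℝ)/4) ≤ 2 * Real.sqrt (2/a) / δ ^ ((1:ℝ)/4) := by
    apply div_le_div_of_nonneg_left (by positivity) hδx0 hδx
  have hκδ : δ/4 ≤ 1 - (κ₁ β A)^2 := by linarith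
  have h2 : K (κ₁ β A) ≤ 2 / Real.sqrt (δ/4) := by
    calc K (κ₁ β A) ≤ 2 / Real.sqrt (1 - (κ₁ β A)^2) := K_le hκlt
      _ ≤ 2 / Real.sqrt (δ/4) := by
          apply div_le_div_of_nonneg_left (by norm_num) (Real.sqrt_pos.2 hδ4)
            (Real.sqrt_le_sqrt hκδ)
  rw [T₁]
  have hK0 : 0 ≤ K (κ₁ β A) := le_trans (by norm_num) (half_le_K hκlt)
  exact mul_le_mul h1 h2 hK0 (by positivity)

lemma T₂_lower {a β A : ℝ} (ha : 0 < a) (hβ0 : 0 < β) (hβ1 : β < 1)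
    (hA : 0 < A) (hA2 : A < 1/(1+β)) : 1 / Real.sqrt a ≤ T₂ a β A := by
  obtain ⟨hκlt, _⟩ := kappa2_facts hβ0 hβ1
  have hb : (0:ℝ) < 1 + β := by linarith
  have hle : a * A * (1+β) ≤ a := by
    rw [lt_div_iff₀ hb] at hA2
    nlinarith
  have hp : 0 < a * A * (1+β) := by positivity
  have h1 : 2 / Real.sqrt a ≤ 2 / Real.sqrt (a * A * (1+β)) :=
    div_le_div_of_nonneg_left (by norm_num) (Real.sqrt_pos.2 hp) (Real.sqrt_le_sqrt hle)
  have h2 := half_le_K hκlt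
  rw [T₂]
  calc 1 / Real.sqrt a = (2 / Real.sqrt a) * (1/2) := by ring
    _ ≤ 2 / Real.sqrt (a * A * (1+β)) * K (κ₂ β) :=
        mul_le_mul h1 h2 (by norm_num) (by positivity)

lemma T₂_upper {a β A : ℝ} (ha : 0 < a) (hβ0 : 0 < β) (hβ1 : β < 1) (hA : 0 < A) :
    T₂ a β A ≤ 4 / Real.sqrt (a * A) := by
  obtain ⟨hκlt, hκeq⟩ := kappa2_facts hβ0 hβ1
  have hb : (0:ℝ) < 1 + β := by linarith
  have hKle : K (κ₂ β) ≤ 2 * Real.sqrt (1+β) := by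
    have := K_le hκlt
    rw [hκeq] at this
    calc K (κ₂ β) ≤ 2 / Real.sqrt (1/(1+β)) := this
      _ = 2 * Real.sqrt (1+β) := by
          rw [one_div, Real.sqrt_inv, div_inv_eq_mul]
  have hsb : 0 < Real.sqrt (1+β) := Real.sqrt_pos.2 hb
  have hsaA : 0 < Real.sqrt (a*A) := Real.sqrt_pos.2 (by positivity)
  have hsplit : Real.sqrt (a * A * (1+β)) = Real.sqrt (a*A) * Real.sqrt (1+β) :=
    Real.sqrt_mul (by positivity) _
  rw [T₂, hsplit]
  have hK0 : 0 ≤ K (κ₂ β) := le_trans (by norm_num) (half_le_K hκlt)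
  calc 2 / (Real.sqrt (a*A) * Real.sqrt (1+β)) * K (κ₂ β)
      ≤ 2 / (Real.sqrt (a*A) * Real.sqrt (1+β)) * (2 * Real.sqrt (1+β)) := by
        apply mul_le_mul_of_nonneg_left hKle (by positivity)
    _ = 4 / Real.sqrt (a*A) := by field_simp; ring


end Aux

/-- Let `Ahat q = Ahat₁(β,q)` be the implicit solution of `q T₁(β,·) = T₂(β,·)` for
positive rationals `q`. Then `Ahat q → 1/(1+β)` as `q → 0⁺` and `Ahat q → 0` as `q → +∞`. -/
theorem A₁_limits_in_q (a : ℝ) (ha : 0 < a) (β : ℝ) (hβ : β ∈ Set.Ioo (0:ℝ) 1)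
    (Ahat : ℚ → ℝ)
    (hAhat : ∀ q : ℚ, 0 < q →
      Ahat q ∈ Set.Ioo 0 (1 / (1 + β)) ∧ (q : ℝ) * T₁ a β (Ahat q) = T₂ a β (Ahat q)) :
    Tendsto Ahat (𝓝[>] (0:ℚ)) (𝓝 (1 / (1 + β))) ∧ Tendsto Ahat atTop (𝓝 0) := by
  obtain ⟨hβ0, hβ1⟩ := hβ
  have hb : (0:ℝ) < 1 + β := by linarith
  constructor
  · -- q → 0⁺
    rw [Metric.tendsto_nhds]
    intro ε hε
    set ε' : ℝ := min ε (1/(1+β)) with hε'def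
    have hε'0 : 0 < ε' := lt_min hε (by positivity)
    have hε'R : ε' ≤ 1/(1+β) := min_le_right _ _
    have hε'ε : ε' ≤ ε := min_le_left _ _
    set δ : ℝ := ε' * (1+β) with hδdef
    have hδ0 : 0 < δ := by positivity
    set M : ℝ := 2 * Real.sqrt (2/a) / δ ^ ((1:ℝ)/4) * (2 / Real.sqrt (δ/4)) with hMdef
    have hM0 : 0 < M := by
      have h1 : 0 < δ ^ ((1:ℝ)/4) := Real.rpow_pos_of_pos hδ0 _
      have h2 : 0 < Real.sqrt (δ/4) := Real.sqrt_pos.2 (by linarith)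
      have h3 : 0 < Real.sqrt (2/a) := Real.sqrt_pos.2 (by positivity)
      positivity
    have hc₀ : (0:ℝ) < 1 / Real.sqrt a := by
      have := Real.sqrt_pos.2 ha
      positivity
    obtain ⟨q₀, hq₀0, hq₀⟩ := exists_rat_btwn (show (0:ℝ) < 1 / Real.sqrt a / M by positivity)
    have hq₀0' : (0:ℚ) < q₀ := by exact_mod_cast hq₀0
    filter_upwards [Ioo_mem_nhdsGT_of_mem (show (0:ℚ) ∈ Set.Ico 0 q₀ from ⟨le_refl _, hq₀0'⟩)]
      with q hq
    obtain ⟨hq0, hqlt⟩ := hq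
    obtain ⟨⟨hA0, hAR⟩, heq⟩ := hAhat q hq0
    have hmain : 1/(1+β) - ε' < Ahat q := by
      by_contra hcon
      push_neg at hcon
      have hδA : δ ≤ 1 - Ahat q * (1+β) := by
        have : Ahat q * (1+β) ≤ (1/(1+β) - ε') * (1+β) :=
          mul_le_mul_of_nonneg_right hcon hb.le
        have hexp : (1/(1+β) - ε') * (1+β) = 1 - ε' * (1+β) := by field_simp
        rw [hexp] at this
        linarith
      have hT₁ : T₁ a β (Ahat q) ≤ M := T₁_upper ha hβ0 hβ1 hA0 hAR hδ0 hδA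
      have hT₂ : 1 / Real.sqrt a ≤ T₂ a β (Ahat q) := T₂_lower ha hβ0 hβ1 hA0 hAR
      have hq0' : (0:ℝ) < (q:ℝ) := by exact_mod_cast hq0
      have h1 : 1 / Real.sqrt a ≤ (q:ℝ) * M := by
        calc 1 / Real.sqrt a ≤ T₂ a β (Ahat q) := hT₂
          _ = (q:ℝ) * T₁ a β (Ahat q) := heq.symm
          _ ≤ (q:ℝ) * M := by nlinarith
      have h2 : 1 / Real.sqrt a / M ≤ (q:ℝ) := by
        rw [div_le_iff₀ hM0]
        linarith
      have h3 : (q:ℝ) < 1 / Real.sqrt a / M := by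
        calc (q:ℝ) < (q₀:ℝ) := by exact_mod_cast hqlt
          _ < _ := hq₀
      linarith
    rw [Real.dist_eq, abs_of_neg (by linarith), neg_sub]
    linarith
  · -- q → ∞
    have hbound : ∀ᶠ q : ℚ in atTop, Ahat q ≤ 8 / (q:ℝ)^2 := by
      filter_upwards [eventually_gt_atTop (0:ℚ)] with q hq0
      obtain ⟨⟨hA0, hAR⟩, heq⟩ := hAhat q hq0
      have hq0' : (0:ℝ) < (q:ℝ) := by exact_mod_cast hq0
      have hT₁ : Real.sqrt (2/a) ≤ T₁ a β (Ahat q) := T₁_lower ha hβ0 hβ1 hA0 hAR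
      have hT₂ : T₂ a β (Ahat q) ≤ 4 / Real.sqrt (a * Ahat q) := T₂_upper ha hβ0 hβ1 hA0
      have hchain : (q:ℝ) * Real.sqrt (2/a) ≤ 4 / Real.sqrt (a * Ahat q) := by
        calc (q:ℝ) * Real.sqrt (2/a) ≤ (q:ℝ) * T₁ a β (Ahat q) := by nlinarith
          _ = T₂ a β (Ahat q) := heq
          _ ≤ _ := hT₂
      have hsaA : 0 < Real.sqrt (a * Ahat q) := Real.sqrt_pos.2 (by positivity)
      have hmul : (q:ℝ) * Real.sqrt (2/a) * Real.sqrt (a * Ahat q) ≤ 4 := by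
        rw [← le_div_iff₀ hsaA]
        exact hchain
      have hsqrt2A : Real.sqrt (2/a) * Real.sqrt (a * Ahat q) = Real.sqrt (2 * Ahat q) := by
        rw [← Real.sqrt_mul (by positivity)]
        congr 1
        field_simp
      rw [mul_assoc, hsqrt2A] at hmul
      have hs2A : Real.sqrt (2 * Ahat q) ≤ 4 / (q:ℝ) := by
        rw [le_div_iff₀ hq0']
        linarith [hmul]
      have hsq : 2 * Ahat q ≤ (4 / (q:ℝ))^2 := by
        have h0 : 0 ≤ 2 * Ahat q := by linarith
        calc 2 * Ahat q = (Real.sqrt (2 * Ahat q))^2 := (Real.sq_sqrt h0).symm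
          _ ≤ (4 / (q:ℝ))^2 := by
              apply pow_le_pow_left₀ (Real.sqrt_nonneg _) hs2A
      have : (4 / (q:ℝ))^2 = 16 / (q:ℝ)^2 := by
        rw [div_pow]; norm_num
      rw [this] at hsq
      have h16 : (16:ℝ)/(q:ℝ)^2 = 2*(8/(q:ℝ)^2) := by ring
      linarith
    have hpos : ∀ᶠ q : ℚ in atTop, (0:ℝ) ≤ Ahat q := by
      filter_upwards [eventually_gt_atTop (0:ℚ)] with q hq0
      exact ((hAhat q hq0).1.1).le
    have hlim : Tendsto (fun q : ℚ => 8 / (q:ℝ)^2) atTop (𝓝 0) := by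
      apply Tendsto.div_atTop (tendsto_const_nhds (x := (8:ℝ)))
      have hcast : Tendsto (fun q : ℚ => (q:ℝ)) atTop atTop :=
        tendsto_ratCast_atTop_iff.mpr tendsto_id
      exact (tendsto_pow_atTop (by norm_num : (2:ℕ) ≠ 0)).comp hcast
    exact tendsto_of_tendsto_of_tendsto_of_le_of_le' tendsto_const_nhds hlim hpos hbound
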